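/- Let F > 0, and set f(t) = 1/(π(t²+1)) and h(t) = -t/(π(t²+1)). Define T(x) = lim_{R→∞} ∫_{x}^{R} ( sin((x-t)/F²)·f(t) + cos((x-t)/F²)·h(t) ) dt. Then T(x) is well defined for every real x (the limit exists) and T(x) → 0 as x → +∞. -/

import Mathlib

open Filter MeasureTheory Set

private lemma aux_hasDerivAt (c : ℝ) (hc : c ≠ 0) (x t : ℝ) :
    HasDerivAt (fun s : ℝ => c * (Real.cos ((x - s) / c) * (1 / (Real.pi * (s ^ 2 + 1)))
        - Real.sin ((x - s) / c) * (-s / (Real.pi * (s ^ 2 + 1)))))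
      ((Real.sin ((x - t) / c) * (1 / (Real.pi * (t ^ 2 + 1)))
          + Real.cos ((x - t) / c) * (-t / (Real.pi * (t ^ 2 + 1))))
        + c * (Real.cos ((x - t) / c) * (-(2 * t) / (Real.pi * (t ^ 2 + 1) ^ 2))
          - Real.sin ((x - t) / c) * ((t ^ 2 - 1) / (Real.pi * (t ^ 2 + 1) ^ 2)))) t := by
  have hπ : Real.pi ≠ 0 := Real.pi_ne_zero
  have hden : Real.pi * (t ^ 2 + 1) ≠ 0 := by positivity
  have hu : HasDerivAt (fun s : ℝ => (x - s) / c) (-1 / c) t := by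
    simpa [neg_div] using ((hasDerivAt_const t x).sub (hasDerivAt_id t)).div_const c
  have hden' : HasDerivAt (fun s : ℝ => Real.pi * (s ^ 2 + 1)) (Real.pi * (2 * t)) t := by
    have h1 : HasDerivAt (fun s : ℝ => s ^ 2 + 1) (2 * t) t := by
      simpa using (hasDerivAt_pow 2 t).add_const 1
    exact h1.const_mul Real.pi
  have hF : HasDerivAt (fun s : ℝ => 1 / (Real.pi * (s ^ 2 + 1)))
      (-(2 * t) / (Real.pi * (t ^ 2 + 1) ^ 2)) t := by
    have := (hasDerivAt_const t (1 : ℝ)).div hden' hden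
    refine this.congr_deriv ?_
    field_simp
    ring
  have hH : HasDerivAt (fun s : ℝ => -s / (Real.pi * (s ^ 2 + 1)))
      ((t ^ 2 - 1) / (Real.pi * (t ^ 2 + 1) ^ 2)) t := by
    have hnum : HasDerivAt (fun s : ℝ => -s) (-1 : ℝ) t := (hasDerivAt_id t).neg
    have := hnum.div hden' hden
    refine this.congr_deriv ?_
    field_simp
    ring
  have hcos := hu.cos
  have hsin := hu.sin
  have := ((hcos.mul hF).sub (hsin.mul hH)).const_mul c
  refine this.congr_deriv ?_
  field_simp
  ring

private lemma aux_r_bound (c : ℝ) (hc : 0 < c) (x t : ℝ) :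
    |c * (Real.cos ((x - t) / c) * (-(2 * t) / (Real.pi * (t ^ 2 + 1) ^ 2))
        - Real.sin ((x - t) / c) * ((t ^ 2 - 1) / (Real.pi * (t ^ 2 + 1) ^ 2)))|
      ≤ (2 * c / Real.pi) * (1 + t ^ 2)⁻¹ := by
  have hπ : (0 : ℝ) < Real.pi := Real.pi_pos
  have hden : (0 : ℝ) < Real.pi * (t ^ 2 + 1) := by positivity
  have e1 : |(-(2 * t) / (Real.pi * (t ^ 2 + 1) ^ 2))| ≤ 1 / (Real.pi * (t ^ 2 + 1)) := by
    rw [abs_div, abs_of_pos (by positivity : (0:ℝ) < Real.pi * (t ^ 2 + 1) ^ 2)]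
    rw [div_le_div_iff₀ (by positivity) hden]
    have h2t : |(-(2 * t))| ≤ t ^ 2 + 1 := by
      rw [abs_neg, abs_mul, abs_two]
      nlinarith [sq_nonneg (|t| - 1), sq_abs t]
    nlinarith [abs_nonneg (-(2 * t)), sq_nonneg t]
  have e2 : |((t ^ 2 - 1) / (Real.pi * (t ^ 2 + 1) ^ 2))| ≤ 1 / (Real.pi * (t ^ 2 + 1)) := by
    rw [abs_div, abs_of_pos (by positivity : (0:ℝ) < Real.pi * (t ^ 2 + 1) ^ 2)]
    rw [div_le_div_iff₀ (by positivity) hden]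
    have h2t : |t ^ 2 - 1| ≤ t ^ 2 + 1 := by
      rw [abs_le]
      constructor <;> nlinarith [sq_nonneg t]
    nlinarith [abs_nonneg (t ^ 2 - 1), sq_nonneg t]
  have hcb : |Real.cos ((x - t) / c)| ≤ 1 := Real.abs_cos_le_one _
  have hsb : |Real.sin ((x - t) / c)| ≤ 1 := Real.abs_sin_le_one _
  rw [abs_mul, abs_of_pos hc]
  calc c * |Real.cos ((x - t) / c) * (-(2 * t) / (Real.pi * (t ^ 2 + 1) ^ 2))
        - Real.sin ((x - t) / c) * ((t ^ 2 - 1) / (Real.pi * (t ^ 2 + 1) ^ 2))|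
      ≤ c * (|Real.cos ((x - t) / c) * (-(2 * t) / (Real.pi * (t ^ 2 + 1) ^ 2))|
        + |Real.sin ((x - t) / c) * ((t ^ 2 - 1) / (Real.pi * (t ^ 2 + 1) ^ 2))|) := by
        gcongr
        exact abs_sub _ _
    _ ≤ c * (1 / (Real.pi * (t ^ 2 + 1)) + 1 / (Real.pi * (t ^ 2 + 1))) := by
        gcongr
        · rw [abs_mul]
          calc |Real.cos ((x - t) / c)| * |(-(2 * t) / (Real.pi * (t ^ 2 + 1) ^ 2))|
              ≤ 1 * (1 / (Real.pi * (t ^ 2 + 1))) := by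
                apply mul_le_mul hcb e1 (abs_nonneg _) zero_le_one
            _ = 1 / (Real.pi * (t ^ 2 + 1)) := one_mul _
        · rw [abs_mul]
          calc |Real.sin ((x - t) / c)| * |((t ^ 2 - 1) / (Real.pi * (t ^ 2 + 1) ^ 2))|
              ≤ 1 * (1 / (Real.pi * (t ^ 2 + 1))) := by
                apply mul_le_mul hsb e2 (abs_nonneg _) zero_le_one
            _ = 1 / (Real.pi * (t ^ 2 + 1)) := one_mul _
    _ = (2 * c / Real.pi) * (1 + t ^ 2)⁻¹ := by
        field_simp
        ring

private lemma aux_G_bound (c : ℝ) (hc : 0 < c) (x R : ℝ) (hR : 1 ≤ R) :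
    |c * (Real.cos ((x - R) / c) * (1 / (Real.pi * (R ^ 2 + 1)))
        - Real.sin ((x - R) / c) * (-R / (Real.pi * (R ^ 2 + 1))))|
      ≤ (2 * c / Real.pi) * R⁻¹ := by
  have hπ : (0 : ℝ) < Real.pi := Real.pi_pos
  have hR0 : (0 : ℝ) < R := by linarith
  have e1 : |1 / (Real.pi * (R ^ 2 + 1))| ≤ 1 / (Real.pi * R) := by
    rw [abs_of_pos (by positivity)]
    apply one_div_le_one_div_of_le (by positivity)
    have hle : R ≤ R ^ 2 + 1 := by nlinarith [sq_nonneg (R - 1)]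
    exact mul_le_mul_of_nonneg_left hle hπ.le
  have e2 : |(-R / (Real.pi * (R ^ 2 + 1)))| ≤ 1 / (Real.pi * R) := by
    rw [abs_div, abs_neg, abs_of_pos hR0, abs_of_pos (by positivity)]
    rw [div_le_div_iff₀ (by positivity) (by positivity)]
    nlinarith
  have hcb : |Real.cos ((x - R) / c)| ≤ 1 := Real.abs_cos_le_one _
  have hsb : |Real.sin ((x - R) / c)| ≤ 1 := Real.abs_sin_le_one _
  rw [abs_mul, abs_of_pos hc]
  calc c * |Real.cos ((x - R) / c) * (1 / (Real.pi * (R ^ 2 + 1)))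
        - Real.sin ((x - R) / c) * (-R / (Real.pi * (R ^ 2 + 1)))|
      ≤ c * (|Real.cos ((x - R) / c) * (1 / (Real.pi * (R ^ 2 + 1)))|
        + |Real.sin ((x - R) / c) * (-R / (Real.pi * (R ^ 2 + 1)))|) := by
        gcongr
        exact abs_sub _ _
    _ ≤ c * (1 / (Real.pi * R) + 1 / (Real.pi * R)) := by
        gcongr
        · rw [abs_mul]
          calc |Real.cos ((x - R) / c)| * |1 / (Real.pi * (R ^ 2 + 1))|
              ≤ 1 * (1 / (Real.pi * R)) := mul_le_mul hcb e1 (abs_nonneg _) zero_le_one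
            _ = 1 / (Real.pi * R) := one_mul _
        · rw [abs_mul]
          calc |Real.sin ((x - R) / c)| * |(-R / (Real.pi * (R ^ 2 + 1)))|
              ≤ 1 * (1 / (Real.pi * R)) := mul_le_mul hsb e2 (abs_nonneg _) zero_le_one
            _ = 1 / (Real.pi * R) := one_mul _
    _ = (2 * c / Real.pi) * R⁻¹ := by
        field_simp
        ring

/-- The tail integral `T(x) = ∫_x^∞ (sin((x-t)/F²)·f(t) + cos((x-t)/F²)·h(t)) dt` is
well defined as an improper integral and tends to `0` as `x → +∞`. -/
theorem tail_integral_tendsto_zero (F : ℝ) (hF : 0 < F)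
    (f h : ℝ → ℝ)
    (hf : ∀ t : ℝ, f t = 1 / (Real.pi * (t ^ 2 + 1)))
    (hh : ∀ t : ℝ, h t = -t / (Real.pi * (t ^ 2 + 1))) :
    ∃ T : ℝ → ℝ,
      (∀ x : ℝ,
        Tendsto (fun R : ℝ =>
            ∫ t in x..R,
              Real.sin ((x - t) / F ^ 2) * f t + Real.cos ((x - t) / F ^ 2) * h t)
          atTop (nhds (T x))) ∧
      Tendsto T atTop (nhds 0) := by
  have hfe : f = fun t => 1 / (Real.pi * (t ^ 2 + 1)) := funext hf
  have hhe : h = fun t => -t / (Real.pi * (t ^ 2 + 1)) := funext hh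
  subst hfe hhe
  have hπ : (0 : ℝ) < Real.pi := Real.pi_pos
  have hc : (0 : ℝ) < F ^ 2 := by positivity
  set c := F ^ 2 with hcdef
  set g : ℝ → ℝ → ℝ := fun x t =>
    Real.sin ((x - t) / c) * (1 / (Real.pi * (t ^ 2 + 1)))
      + Real.cos ((x - t) / c) * (-t / (Real.pi * (t ^ 2 + 1))) with hgdef
  set r : ℝ → ℝ → ℝ := fun x t =>
    c * (Real.cos ((x - t) / c) * (-(2 * t) / (Real.pi * (t ^ 2 + 1) ^ 2))
      - Real.sin ((x - t) / c) * ((t ^ 2 - 1) / (Real.pi * (t ^ 2 + 1) ^ 2))) with hrdef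
  set G : ℝ → ℝ → ℝ := fun x t =>
    c * (Real.cos ((x - t) / c) * (1 / (Real.pi * (t ^ 2 + 1)))
      - Real.sin ((x - t) / c) * (-t / (Real.pi * (t ^ 2 + 1)))) with hGdef
  have hden1 : Continuous fun t : ℝ => Real.pi * (t ^ 2 + 1) := by continuity
  have hden2 : Continuous fun t : ℝ => Real.pi * (t ^ 2 + 1) ^ 2 := by continuity
  have hu : ∀ x : ℝ, Continuous fun t : ℝ => (x - t) / c :=
    fun x => (continuous_const.sub continuous_id).div_const c
  have hcont_g : ∀ x, Continuous (g x) := by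
    intro x
    apply Continuous.add
    · exact (Real.continuous_sin.comp (hu x)).mul
        (continuous_const.div hden1 fun t => by positivity)
    · exact (Real.continuous_cos.comp (hu x)).mul
        (continuous_id.neg.div hden1 fun t => by positivity)
  have hcont_r : ∀ x, Continuous (r x) := by
    intro x
    refine continuous_const.mul (Continuous.sub ?_ ?_)
    · exact (Real.continuous_cos.comp (hu x)).mul
        ((by continuity : Continuous fun t : ℝ => -(2 * t)).div hden2 fun t => by positivity)
    · exact (Real.continuous_sin.comp (hu x)).mul
        ((by continuity : Continuous fun t : ℝ => t ^ 2 - 1).div hden2 fun t => by positivity)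
  have hrb : ∀ x t, ‖r x t‖ ≤ (2 * c / Real.pi) * (1 + t ^ 2)⁻¹ := fun x t => by
    rw [Real.norm_eq_abs]
    exact aux_r_bound c hc x t
  have hD : Integrable (fun t : ℝ => (2 * c / Real.pi) * (1 + t ^ 2)⁻¹) :=
    integrable_inv_one_add_sq.const_mul _
  have hrint : ∀ x, IntegrableOn (r x) (Ioi x) := fun x =>
    Integrable.mono' hD.integrableOn ((hcont_r x).aestronglyMeasurable.restrict)
      (ae_of_all _ fun t => hrb x t)
  refine ⟨fun x => -(G x x) - ∫ t in Ioi x, r x t, fun x => ?_, ?_⟩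
  · have key : ∀ R : ℝ, (∫ t in x..R, g x t) = (G x R - G x x) - ∫ t in x..R, r x t := by
      intro R
      have hderiv : ∀ t ∈ uIcc x R, HasDerivAt (G x) (g x t + r x t) t := fun t _ =>
        aux_hasDerivAt c hc.ne' x t
      have h1 : (∫ t in x..R, (g x t + r x t)) = G x R - G x x :=
        intervalIntegral.integral_eq_sub_of_hasDerivAt hderiv
          (((hcont_g x).add (hcont_r x)).intervalIntegrable x R)
      have h2 : (∫ t in x..R, (g x t + r x t))
          = (∫ t in x..R, g x t) + ∫ t in x..R, r x t :=
        intervalIntegral.integral_add ((hcont_g x).intervalIntegrable x R)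
          ((hcont_r x).intervalIntegrable x R)
      linarith
    have hGtend : Tendsto (fun R => G x R) atTop (nhds 0) := by
      refine squeeze_zero_norm' (a := fun R : ℝ => (2 * c / Real.pi) * R⁻¹) ?_ ?_
      · filter_upwards [eventually_ge_atTop (1 : ℝ)] with R hR
        rw [Real.norm_eq_abs]
        exact aux_G_bound c hc x R hR
      · simpa using tendsto_inv_atTop_zero.const_mul (2 * c / Real.pi)
    have hItend : Tendsto (fun R => ∫ t in x..R, r x t) atTop
        (nhds (∫ t in Ioi x, r x t)) :=
      intervalIntegral_tendsto_integral_Ioi x (hrint x) tendsto_id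
    have hmain := (hGtend.sub (tendsto_const_nhds (x := G x x) (f := (atTop : Filter ℝ)))).sub hItend
    refine Tendsto.congr (fun R => (key R).symm) ?_
    simpa using hmain
  · have hxx : ∀ x : ℝ, G x x = c * (1 / (Real.pi * (x ^ 2 + 1))) := fun x => by
      simp [hGdef]
    have h1 : Tendsto (fun x : ℝ => -(G x x)) atTop (nhds 0) := by
      have hden : Tendsto (fun x : ℝ => Real.pi * (x ^ 2 + 1)) atTop atTop := by
        apply Tendsto.const_mul_atTop hπ
        exact tendsto_atTop_add_const_right _ 1 (tendsto_pow_atTop two_ne_zero)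
      have : Tendsto (fun x : ℝ => c * (1 / (Real.pi * (x ^ 2 + 1)))) atTop (nhds 0) := by
        simpa [one_div] using (hden.inv_tendsto_atTop.const_mul c)
      have h0 : Tendsto (fun x : ℝ => G x x) atTop (nhds 0) :=
        Tendsto.congr (fun x => (hxx x).symm) this
      simpa using h0.neg
    have h2 : Tendsto (fun x : ℝ => ∫ t in Ioi x, r x t) atTop (nhds 0) := by
      have hb : ∀ x : ℝ, ‖∫ t in Ioi x, r x t‖
          ≤ (2 * c / Real.pi) * (Real.pi / 2 - Real.arctan x) := by
        intro x
        calc ‖∫ t in Ioi x, r x t‖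
            ≤ ∫ t in Ioi x, (2 * c / Real.pi) * (1 + t ^ 2)⁻¹ :=
              norm_integral_le_of_norm_le hD.integrableOn (ae_of_all _ fun t => hrb x t)
          _ = (2 * c / Real.pi) * (Real.pi / 2 - Real.arctan x) := by
              rw [MeasureTheory.integral_const_mul, integral_Ioi_inv_one_add_sq]
      have harctan : Tendsto (fun x : ℝ => Real.pi / 2 - Real.arctan x) atTop (nhds 0) := by
        have := tendsto_nhds_of_tendsto_nhdsWithin Real.tendsto_arctan_atTop
        simpa using (tendsto_const_nhds (x := Real.pi / 2) (f := atTop)).sub this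
      have hRHS : Tendsto (fun x : ℝ => (2 * c / Real.pi) * (Real.pi / 2 - Real.arctan x))
          atTop (nhds 0) := by
        simpa using harctan.const_mul (2 * c / Real.pi)
      exact squeeze_zero_norm hb hRHS
    simpa using h1.sub h2
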